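/- For every integer p ≥ 3 and every integer q > 1, setting n = q² + q + 1, one has (n−1)^p + (n−1)·2^p − ((q+1)·q^p + q²·(q+1)^p) = q(q+1)·2^p + q²(q+1)·([q^{p−2} − 1][(q+1)^{p−1} − 1] − 1) > 0; that is, e_p(F_n) exceeds the degree power of any graph on n vertices with q+1 vertices of degree q and q² vertices of degree q+1. -/
import Mathlib


theorem friendship_beats_polarity_graph (p q n : ℕ) (hp : 3 ≤ p) (hq : 1 < q)
    (hn : n = q ^ 2 + q + 1) :
    (((n : ℤ) - 1) ^ p + ((n : ℤ) - 1) * 2 ^ p -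
        (((q : ℤ) + 1) * q ^ p + q ^ 2 * ((q : ℤ) + 1) ^ p) =
      (q : ℤ) * (q + 1) * 2 ^ p +
        (q : ℤ) ^ 2 * (q + 1) *
          (((q : ℤ) ^ (p - 2) - 1) * (((q : ℤ) + 1) ^ (p - 1) - 1) - 1)) ∧
    0 < ((n : ℤ) - 1) ^ p + ((n : ℤ) - 1) * 2 ^ p -
        (((q : ℤ) + 1) * q ^ p + q ^ 2 * ((q : ℤ) + 1) ^ p) := by
  obtain ⟨k, rfl⟩ := Nat.exists_eq_add_of_le hp
  subst hn
  have hq2 : (2 : ℤ) ≤ (q : ℤ) := by exact_mod_cast hq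
  have h1 : (3 + k) - 2 = k + 1 := by omega
  have h2 : (3 + k) - 1 = k + 2 := by omega
  have heq : (((q ^ 2 + q + 1 : ℕ) : ℤ) - 1) ^ (3 + k)
      + (((q ^ 2 + q + 1 : ℕ) : ℤ) - 1) * 2 ^ (3 + k) -
        (((q : ℤ) + 1) * q ^ (3 + k) + q ^ 2 * ((q : ℤ) + 1) ^ (3 + k)) =
      (q : ℤ) * (q + 1) * 2 ^ (3 + k) +
        (q : ℤ) ^ 2 * (q + 1) *
          (((q : ℤ) ^ (k + 1) - 1) * (((q : ℤ) + 1) ^ (k + 2) - 1) - 1) := by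
    push_cast
    rw [show ((q:ℤ)^2+(q:ℤ)+1-1) = (q:ℤ)*((q:ℤ)+1) from by ring, mul_pow]
    ring
  rw [h1, h2]
  refine ⟨heq, ?_⟩
  rw [heq]
  have ha' : (2 : ℤ) ^ (k + 1) ≤ (q : ℤ) ^ (k + 1) := pow_le_pow_left₀ (by norm_num) hq2 _
  have h2k : (2 : ℤ) ≤ 2 ^ (k + 1) := by
    calc (2:ℤ) = 2 ^ 1 := by norm_num
    _ ≤ 2 ^ (k + 1) := pow_le_pow_right₀ (by norm_num) (by omega)
  have hb' : (3 : ℤ) ^ (k + 2) ≤ ((q : ℤ) + 1) ^ (k + 2) := pow_le_pow_left₀ (by norm_num) (by linarith) _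
  have h3k : (9 : ℤ) ≤ 3 ^ (k + 2) := by
    calc (9:ℤ) = 3 ^ 2 := by norm_num
    _ ≤ 3 ^ (k + 2) := pow_le_pow_right₀ (by norm_num) (by omega)
  have hA : (1 : ℤ) ≤ (q : ℤ) ^ (k + 1) - 1 := by linarith [ha', h2k]
  have hB : (8 : ℤ) ≤ ((q : ℤ) + 1) ^ (k + 2) - 1 := by linarith
  have hprod : (8 : ℤ) ≤ ((q : ℤ) ^ (k + 1) - 1) * (((q : ℤ) + 1) ^ (k + 2) - 1) := by
    calc (8:ℤ) = 1 * 8 := by norm_num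
    _ ≤ _ := mul_le_mul hA hB (by norm_num) (by linarith)
  have hpow2 : (0 : ℤ) < 2 ^ (3 + k) := by positivity
  have hq0 : (0 : ℤ) < (q : ℤ) := by linarith
  nlinarith [mul_pos (mul_pos hq0 (by linarith : (0:ℤ) < (q:ℤ) + 1)) hpow2,
    mul_nonneg (mul_nonneg (sq_nonneg (q:ℤ)) (by linarith : (0:ℤ) ≤ (q:ℤ)+1)) (by linarith : (0:ℤ) ≤ ((q : ℤ) ^ (k + 1) - 1) * (((q : ℤ) + 1) ^ (k + 2) - 1) - 1)]
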